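/- Let A ∈ 𝒮ⁿ[k] be a Robinson matrix and let d ∈ 𝔻ᵏ satisfy the path condition for A. Then for every (u,v)-upper-bound-walk W there exists a (u,v)-upper-bound-path W′ with β⁺(W′)ᵀ d ≤ β⁺(W)ᵀ d, and for every (u,v)-lower-bound-walk W there exists a (u,v)-lower-bound-path W′ with β⁻(W′)ᵀ d ≥ β⁻(W)ᵀ d. -/

import Mathlib

/-- The standard unit vector `χ_t ∈ ℤᵏ` (as a function `ℕ → ℤ`, supported on index `t`). -/
def chi (t : ℕ) : ℕ → ℤ := fun i => if i = t then 1 else 0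

/-- The dot product `bᵀ d = Σ_{i=1}^k b_i d_i`. -/
def dotProd (k : ℕ) (b : ℕ → ℤ) (d : ℕ → ℝ) : ℝ :=
  ∑ i ∈ Finset.Icc 1 k, (b i : ℝ) * d i

/-- `A ∈ 𝒮ⁿ[k]`: a symmetric matrix with entries in `{0,…,k}`, diagonal `k`,
entries increasing towards the diagonal. -/
def IsRobinson (n k : ℕ) (a : Fin n → Fin n → ℕ) : Prop :=
  (∀ u v, a u v = a v u) ∧ (∀ u, a u u = k) ∧ (∀ u v, a u v ≤ k) ∧
    ∀ u v w : Fin n, u < v → v < w → a u w ≤ a u v ∧ a u w ≤ a v w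

/-- `d ∈ 𝔻ᵏ`: threshold vectors with `d 1 > d 2 > ⋯ > d k > 0`
(values outside `{1,…,k}` are irrelevant). -/
def IsThreshold (k : ℕ) (d : ℕ → ℝ) : Prop :=
  (∀ i, 1 ≤ i → i < k → d (i + 1) < d i) ∧ 0 < d k

/-- Uniform embedding: for all pairs `u,v` and all `t ≤ k`,
`a u v = t ↔ d_{t+1} < |f v − f u| ≤ d_t`, with conventions `d_0 = +∞`, `d_{k+1} = −∞`. -/
def IsUnifEmb (n k : ℕ) (a : Fin n → Fin n → ℕ) (d : ℕ → ℝ)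
    (f : Fin n → ℝ) : Prop :=
  ∀ u v : Fin n, ∀ t : ℕ, t ≤ k →
    (a u v = t ↔ (t = k ∨ d (t + 1) < |f v - f u|) ∧ (t = 0 ∨ |f v - f u| ≤ d t))

/-- The strict inequality system: for all `u < v` and all `t ≤ k`,
`a u v = t ↔ d_{t+1} < f v − f u < d_t`, with conventions `d_0 = +∞`, `d_{k+1} = 0`. -/
def SatisfiesStrict (n k : ℕ) (a : Fin n → Fin n → ℕ) (d : ℕ → ℝ)
    (f : Fin n → ℝ) : Prop :=
  ∀ u v : Fin n, u < v → ∀ t : ℕ, t ≤ k →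
    (a u v = t ↔ ((if t = k then (0 : ℝ) else d (t + 1)) < f v - f u) ∧
      (t = 0 ∨ f v - f u < d t))

/-- `β⁺(x,y)`: for `x < y`, `β⁺(x,y) = χ_{a x y}` (junk value `χ_0` when `a x y = 0`,
where it is undefined); for `x > y`, `β⁺(x,y) = −β⁻(y,x)`. -/
def betaP {n : ℕ} (k : ℕ) (a : Fin n → Fin n → ℕ) (x y : Fin n) : ℕ → ℤ :=
  if x < y then chi (a x y)
  else if y < x then (if a x y = k then 0 else -chi (a x y + 1))
  else 0

/-- `β⁻(x,y)`: for `x < y`, `β⁻(x,y) = χ_{a x y + 1}` if `a x y < k` and `0` if `a x y = k`;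
for `x > y`, `β⁻(x,y) = −β⁺(y,x)`. -/
def betaM {n : ℕ} (k : ℕ) (a : Fin n → Fin n → ℕ) (x y : Fin n) : ℕ → ℤ :=
  if x < y then (if a x y = k then 0 else chi (a x y + 1))
  else if y < x then -chi (a x y)
  else 0

/-- `β⁺(W) = Σ_i β⁺(w_{i−1}, w_i)` over the steps of the walk `W`. -/
def betaPWalk {n : ℕ} (k : ℕ) (a : Fin n → Fin n → ℕ) (w : List (Fin n)) : ℕ → ℤ :=
  ((w.zip w.tail).map fun p => betaP k a p.1 p.2).sum

/-- `β⁻(W) = Σ_i β⁻(w_{i−1}, w_i)` over the steps of the walk `W`. -/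
def betaMWalk {n : ℕ} (k : ℕ) (a : Fin n → Fin n → ℕ) (w : List (Fin n)) : ℕ → ℤ :=
  ((w.zip w.tail).map fun p => betaM k a p.1 p.2).sum

/-- A `(u,v)`-upper-bound-walk: a walk from `u` to `v` with consecutive entries distinct,
in which every increasing step is an edge (`a x y ≥ 1`). -/
def IsUBWalk {n : ℕ} (a : Fin n → Fin n → ℕ) (u v : Fin n) (w : List (Fin n)) : Prop :=
  w.head? = some u ∧ w.getLast? = some v ∧
    List.Chain' (fun x y => x ≠ y ∧ (x < y → 1 ≤ a x y)) w

/-- A `(u,v)`-lower-bound-walk: a walk from `u` to `v` with consecutive entries distinct,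
in which every decreasing step is an edge (`a x y ≥ 1`). -/
def IsLBWalk {n : ℕ} (a : Fin n → Fin n → ℕ) (u v : Fin n) (w : List (Fin n)) : Prop :=
  w.head? = some u ∧ w.getLast? = some v ∧
    List.Chain' (fun x y => x ≠ y ∧ (y < x → 1 ≤ a x y)) w

/-- An upper-bound-cycle: a `(u,u)`-upper-bound-walk of length `p ≥ 2` in which
`u = w_0 = w_p` is the only repeated vertex. -/
def IsUBCycle {n : ℕ} (a : Fin n → Fin n → ℕ) (w : List (Fin n)) : Prop :=
  ∃ u : Fin n, IsUBWalk a u u w ∧ 3 ≤ w.length ∧ w.dropLast.Nodup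

/-- The path condition for `A` and `d`: for all `u < v`, every `(u,v)`-upper-bound-path `W₁`
and every `(u,v)`-lower-bound-path `W₂` satisfy `β⁻(W₂)ᵀ d < β⁺(W₁)ᵀ d`. -/
def PathCondition (n k : ℕ) (a : Fin n → Fin n → ℕ) (d : ℕ → ℝ) : Prop :=
  ∀ u v : Fin n, u < v → ∀ w₁ w₂ : List (Fin n),
    IsUBWalk a u v w₁ → w₁.Nodup → IsLBWalk a u v w₂ → w₂.Nodup →
      dotProd k (betaMWalk k a w₂) d < dotProd k (betaPWalk k a w₁) d

/-- The prefix-sum partial order `⪯` on `ℤᵏ`. -/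
def Preceq (k : ℕ) (x y : ℕ → ℤ) : Prop :=
  ∀ t, 1 ≤ t → t ≤ k → ∑ i ∈ Finset.Icc 1 t, x i ≤ ∑ i ∈ Finset.Icc 1 t, y i
namespace S6aux

lemma steps_append {α : Type*} : ∀ (l₁ : List α) (x : α) (l₂ : List α),
    (l₁ ++ x :: l₂).zip (l₁ ++ x :: l₂).tail
      = (l₁ ++ [x]).zip (l₁ ++ [x]).tail ++ (x :: l₂).zip l₂
  | [], x, l₂ => by simp
  | [a], x, l₂ => by simp [List.zip_cons_cons]
  | a :: b :: l, x, l₂ => by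
      have h := steps_append (b :: l) x l₂
      simp only [List.cons_append, List.tail_cons, List.zip_cons_cons] at h ⊢
      rw [h]

lemma steps_concat {α : Type*} : ∀ (l : List α) (x : α),
    (l ++ [x]).zip (l ++ [x]).tail
      = l.zip l.tail ++ (l.getLast?.elim [] fun b => [(b, x)])
  | [], x => by simp
  | [a], x => by simp [List.zip_cons_cons]
  | a :: b :: l, x => by
      have h := steps_concat (b :: l) x
      simp only [List.cons_append, List.tail_cons, List.zip_cons_cons] at h ⊢
      rw [h]
      simp [List.getLast?_cons_cons]

lemma steps_reverse {α : Type*} : ∀ (l : List α),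
    l.reverse.zip l.reverse.tail = ((l.zip l.tail).reverse).map Prod.swap
  | [] => by simp
  | [a] => by simp
  | a :: b :: l => by
      have h := steps_reverse (b :: l)
      rw [List.reverse_cons, steps_concat ((b :: l).reverse) a, h]
      simp [List.getLast?_reverse, List.zip_cons_cons]

lemma sum_map_neg {α : Type*} (f : α → ℕ → ℤ) :
    ∀ (l : List α), (l.map fun p => -f p).sum = -(l.map f).sum
  | [] => by simp
  | a :: l => by simp [sum_map_neg f l]; abel

variable {n : ℕ} {k : ℕ} {a : Fin n → Fin n → ℕ}

lemma betaPWalk_split (l₁ : List (Fin n)) (x : Fin n) (l₂ : List (Fin n)) :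
    betaPWalk k a (l₁ ++ x :: l₂)
      = betaPWalk k a (l₁ ++ [x]) + betaPWalk k a (x :: l₂) := by
  unfold betaPWalk
  rw [show (x :: l₂).tail = l₂ from rfl, steps_append, List.map_append, List.sum_append]

lemma betaM_eq_neg_betaP (hsym : ∀ u v, a u v = a v u) (x y : Fin n) :
    betaM k a y x = -betaP k a x y := by
  unfold betaM betaP
  rcases lt_trichotomy x y with h | h | h
  · simp only [if_pos h, if_neg (asymm h), hsym y x]
  · subst h
    simp [lt_irrefl]
  · simp only [if_pos h, if_neg (asymm h), hsym y x]
    split <;> simp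

lemma betaP_eq_neg_betaM (hsym : ∀ u v, a u v = a v u) (x y : Fin n) :
    betaP k a y x = -betaM k a x y := by
  rw [betaM_eq_neg_betaP hsym y x, neg_neg]

lemma betaMWalk_reverse (hsym : ∀ u v, a u v = a v u) (l : List (Fin n)) :
    betaMWalk k a l.reverse = -betaPWalk k a l := by
  unfold betaMWalk betaPWalk
  rw [steps_reverse, List.map_map, List.map_reverse, List.sum_reverse]
  have : ((fun p : Fin n × Fin n => betaM k a p.1 p.2) ∘ Prod.swap)
      = fun p : Fin n × Fin n => -betaP k a p.1 p.2 := by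
    funext p
    exact betaM_eq_neg_betaP hsym p.1 p.2
  rw [this, sum_map_neg]

lemma betaPWalk_reverse (hsym : ∀ u v, a u v = a v u) (l : List (Fin n)) :
    betaPWalk k a l.reverse = -betaMWalk k a l := by
  unfold betaMWalk betaPWalk
  rw [steps_reverse, List.map_map, List.map_reverse, List.sum_reverse]
  have : ((fun p : Fin n × Fin n => betaP k a p.1 p.2) ∘ Prod.swap)
      = fun p : Fin n × Fin n => -betaM k a p.1 p.2 := by
    funext p
    exact betaP_eq_neg_betaM hsym p.1 p.2
  rw [this, sum_map_neg]

lemma dotProd_add (b₁ b₂ : ℕ → ℤ) (d : ℕ → ℝ) :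
    dotProd k (b₁ + b₂) d = dotProd k b₁ d + dotProd k b₂ d := by
  unfold dotProd
  rw [← Finset.sum_add_distrib]
  congr 1
  funext i
  push_cast [Pi.add_apply]
  ring

lemma dotProd_neg (b : ℕ → ℤ) (d : ℕ → ℝ) :
    dotProd k (-b) d = -dotProd k b d := by
  unfold dotProd
  rw [← Finset.sum_neg_distrib]
  congr 1
  funext i
  push_cast [Pi.neg_apply]
  ring

lemma getLast?_snoc {α : Type*} (l : List α) (x : α) :
    (l ++ [x]).getLast? = some x := by
  simp [List.getLast?_append]

lemma getLast?_append_cons {α : Type*} (A : List α) (y : α) (R : List α) :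
    (A ++ y :: R).getLast? = (y :: R).getLast? := by
  rw [List.getLast?_append]
  rw [List.getLast?_eq_getLast (l := y :: R) (by simp)]
  rfl

lemma exists_dup {α : Type*} : ∀ (l : List α), ¬ l.Nodup →
    ∃ (y : α) (P Q R : List α), l = P ++ y :: (Q ++ y :: R)
  | [], h => absurd List.nodup_nil h
  | a :: t, h => by
      by_cases ha : a ∈ t
      · obtain ⟨s, r, rfl⟩ := List.append_of_mem ha
        exact ⟨a, [], s, r, by simp⟩
      · have ht : ¬ t.Nodup := fun hn => h (List.nodup_cons.2 ⟨ha, hn⟩)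
        obtain ⟨y, P, Q, R, hrw⟩ := exists_dup t ht
        exact ⟨y, a :: P, Q, R, by rw [hrw]; simp⟩

lemma chain_splice {α : Type*} {p : α → α → Prop} {P Q R : List α} {y : α}
    (h : List.Chain' p (P ++ y :: (Q ++ y :: R))) :
    List.Chain' p (P ++ y :: R) ∧ List.Chain' p (y :: (Q ++ [y])) := by
  simp only [List.Chain'] at h ⊢
  rw [show P ++ y :: (Q ++ y :: R) = (P ++ [y]) ++ (Q ++ y :: R) by simp,
    List.isChain_append] at h
  obtain ⟨hA, hB, hlink1⟩ := h
  rw [show Q ++ y :: R = (Q ++ [y]) ++ R by simp, List.isChain_append] at hB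
  obtain ⟨hB1, hB2, hlink2⟩ := hB
  have hlastPy : (P ++ [y]).getLast? = some y := getLast?_snoc P y
  constructor
  · rw [show P ++ y :: R = (P ++ [y]) ++ R by simp, List.isChain_append]
    refine ⟨hA, hB2, ?_⟩
    intro x hx z hz
    rw [hlastPy] at hx
    simp only [Option.mem_def, Option.some_inj] at hx
    subst hx
    exact hlink2 y (by rw [getLast?_snoc]; rfl) z hz
  · rw [show (y :: (Q ++ [y])) = [y] ++ (Q ++ [y]) by simp, List.isChain_append]
    refine ⟨List.isChain_singleton y, hB1, ?_⟩
    intro x hx z hz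
    simp only [List.getLast?_singleton, Option.mem_def, Option.some_inj] at hx
    subst hx
    apply hlink1 y (by rw [hlastPy]; rfl)
    rw [List.head?_append] at hz ⊢
    exact hz

lemma ub_reverse (hsym : ∀ u v, a u v = a v u) {u v : Fin n} {w : List (Fin n)}
    (h : IsUBWalk a u v w) : IsLBWalk a v u w.reverse := by
  obtain ⟨h1, h2, h3⟩ := h
  refine ⟨by rw [List.head?_reverse]; exact h2, by rw [List.getLast?_reverse]; exact h1, ?_⟩
  simp only [List.Chain'] at h3 ⊢
  rw [List.isChain_reverse]
  refine h3.imp (fun x y hxy => ?_)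
  exact ⟨fun e => hxy.1 e.symm, fun hlt => by rw [hsym y x]; exact hxy.2 hlt⟩

lemma lb_reverse (hsym : ∀ u v, a u v = a v u) {u v : Fin n} {w : List (Fin n)}
    (h : IsLBWalk a u v w) : IsUBWalk a v u w.reverse := by
  obtain ⟨h1, h2, h3⟩ := h
  refine ⟨by rw [List.head?_reverse]; exact h2, by rw [List.getLast?_reverse]; exact h1, ?_⟩
  simp only [List.Chain'] at h3 ⊢
  rw [List.isChain_reverse]
  refine h3.imp (fun x y hxy => ?_)
  exact ⟨fun e => hxy.1 e.symm, fun hlt => by rw [hsym y x]; exact hxy.2 hlt⟩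

lemma betaPWalk_pair (x y : Fin n) : betaPWalk k a [x, y] = betaP k a x y := by
  simp [betaPWalk]

lemma cyc (hsym : ∀ u v, a u v = a v u) {d : ℕ → ℝ} (hpc : PathCondition n k a d) :
    ∀ (m : ℕ) (w : List (Fin n)), w.length ≤ m → ∀ x : Fin n,
      IsUBWalk a x x w → 0 ≤ dotProd k (betaPWalk k a w) d := by
  intro m
  induction m with
  | zero =>
    intro w hw x h
    obtain ⟨h1, -, -⟩ := h
    rw [List.length_eq_zero_iff.1 (Nat.le_zero.1 hw)] at h1
    simp at h1
  | succ m ih =>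
    intro w hw x h
    obtain ⟨h1, h2, h3⟩ := h
    cases w with
    | nil => simp at h1
    | cons x0 t =>
      have hx0 : x = x0 := by symm; simpa using h1
      subst hx0
      cases t with
      | nil => simp [betaPWalk, dotProd]
      | cons c t' =>
        have hne : (c :: t') ≠ [] := by simp
        have hlastx : (c :: t').getLast hne = x := by
          rw [List.getLast?_cons_cons, List.getLast?_eq_getLast (l := c :: t') hne] at h2
          simpa using h2
        obtain ⟨s, hts⟩ : ∃ s, c :: t' = s ++ [x] :=
          ⟨(c :: t').dropLast, by
            conv_lhs => rw [← List.dropLast_append_getLast hne]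
            rw [hlastx]⟩
        by_cases hnd : (x :: s).Nodup
        · -- simple cycle: use the path condition
          rw [hts] at h3 ⊢
          cases s with
          | nil =>
            obtain ⟨⟨hxx, -⟩, -⟩ := List.isChain_cons_cons.1 h3
            exact absurd rfl hxx
          | cons y s' =>
            have hstep : x ≠ y ∧ (x < y → 1 ≤ a x y) := (List.isChain_cons_cons.1 h3).1
            have hW2 : IsUBWalk a y x (y :: (s' ++ [x])) :=
              ⟨rfl, by
                rw [show y :: (s' ++ [x]) = (y :: s') ++ [x] by simp]
                exact getLast?_snoc _ x, h3.tail⟩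
            have hnodW2 : (y :: (s' ++ [x])).Nodup := by
              rw [show y :: (s' ++ [x]) = (y :: s') ++ [x] by simp, List.nodup_append]
              obtain ⟨hxmem, hnd'⟩ := List.nodup_cons.1 hnd
              refine ⟨hnd', by simp, ?_⟩
              intro z hz z' hz' e
              simp only [List.mem_singleton] at hz'
              rw [e, hz'] at hz
              exact hxmem hz
            have hsplit : betaPWalk k a (x :: ((y :: s') ++ [x]))
                = betaPWalk k a [x, y] + betaPWalk k a (y :: (s' ++ [x])) := by
              have h' := betaPWalk_split (k := k) (a := a) [x] y (s' ++ [x])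
              simpa using h'
            rw [show x :: ((y :: s') ++ [x]) = x :: (y :: (s' ++ [x])) by simp] at hsplit ⊢
            rcases lt_trichotomy x y with hxy | hxy | hxy
            · have hW1 : IsUBWalk a x y [x, y] :=
                ⟨rfl, rfl, List.isChain_cons_cons.2 ⟨hstep, List.isChain_singleton y⟩⟩
              have hLB := ub_reverse hsym hW2
              have hineq := hpc x y hxy [x, y] ((y :: (s' ++ [x])).reverse) hW1
                (by simp [hstep.1]) hLB (List.nodup_reverse.2 hnodW2)
              rw [betaMWalk_reverse hsym, dotProd_neg] at hineq
              rw [hsplit, dotProd_add]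
              linarith
            · exact absurd hxy hstep.1
            · have hLB : IsLBWalk a y x [y, x] :=
                ⟨rfl, rfl, List.isChain_cons_cons.2
                  ⟨⟨Ne.symm hstep.1, fun hlt => absurd hlt (asymm hxy)⟩,
                    List.isChain_singleton x⟩⟩
              have hineq := hpc y x hxy (y :: (s' ++ [x])) [y, x] hW2 hnodW2 hLB
                (by simp [Ne.symm hstep.1])
              have hM : betaMWalk k a [y, x] = -betaPWalk k a [x, y] := by
                rw [betaPWalk_pair]
                simp [betaMWalk, betaM_eq_neg_betaP hsym]
              rw [hM, dotProd_neg] at hineq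
              rw [hsplit, dotProd_add]
              linarith
        · -- a duplicate strictly inside: split off a shorter cycle
          obtain ⟨y, P, Q, R', hPQ⟩ := exists_dup _ hnd
          have hw' : x :: c :: t' = P ++ y :: (Q ++ y :: (R' ++ [x])) := by
            rw [show x :: c :: t' = x :: (c :: t') from rfl, hts,
              show x :: (s ++ [x]) = (x :: s) ++ [x] by simp, hPQ]
            simp
          rw [hw'] at h1 h2 h3 hw ⊢
          obtain ⟨hc1, hc2⟩ := chain_splice h3
          have hh1 : (P ++ y :: (R' ++ [x])).head? = some x := by
            rw [List.head?_append] at h1 ⊢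
            simpa using h1
          have hh2 : (P ++ y :: (R' ++ [x])).getLast? = some x := by
            rw [show P ++ y :: (R' ++ [x]) = (P ++ y :: R') ++ [x] by simp]
            exact getLast?_snoc _ x
          simp only [List.length_append, List.length_cons, List.length_singleton] at hw
          have ih1 : 0 ≤ dotProd k (betaPWalk k a (P ++ y :: (R' ++ [x]))) d := by
            refine ih (P ++ y :: (R' ++ [x])) ?_ x ⟨hh1, hh2, hc1⟩
            simp only [List.length_append, List.length_cons]
            omega
          have ih2 : 0 ≤ dotProd k (betaPWalk k a (y :: (Q ++ [y]))) d := by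
            refine ih (y :: (Q ++ [y])) ?_ y ⟨rfl, by
              rw [show y :: (Q ++ [y]) = (y :: Q) ++ [y] by simp]
              exact getLast?_snoc _ y, hc2⟩
            simp only [List.length_cons, List.length_append, List.length_singleton]
            omega
          have e1 := betaPWalk_split (k := k) (a := a) P y (Q ++ y :: (R' ++ [x]))
          have e2 := betaPWalk_split (k := k) (a := a) (y :: Q) y (R' ++ [x])
          rw [show ((y :: Q) ++ y :: (R' ++ [x])) = y :: (Q ++ y :: (R' ++ [x])) by simp]
            at e2
          have e3 := betaPWalk_split (k := k) (a := a) P y (R' ++ [x])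
          rw [e1, e2, dotProd_add, dotProd_add]
          rw [e3, dotProd_add] at ih1
          rw [show (y :: (Q ++ [y])) = (y :: Q) ++ [y] by simp] at ih2
          linarith

lemma mainUB (hsym : ∀ u v, a u v = a v u) {d : ℕ → ℝ} (hpc : PathCondition n k a d) :
    ∀ (m : ℕ) (w : List (Fin n)), w.length ≤ m → ∀ u v : Fin n,
      IsUBWalk a u v w → ∃ w' : List (Fin n), IsUBWalk a u v w' ∧ w'.Nodup ∧
        dotProd k (betaPWalk k a w') d ≤ dotProd k (betaPWalk k a w) d := by
  intro m
  induction m with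
  | zero =>
    intro w hw u v h
    rw [List.length_eq_zero_iff.1 (Nat.le_zero.1 hw)] at h
    obtain ⟨h1, -, -⟩ := h
    simp at h1
  | succ m ih =>
    intro w hw u v h
    by_cases hnd : w.Nodup
    · exact ⟨w, h, hnd, le_refl _⟩
    · obtain ⟨y, P, Q, R, rfl⟩ := exists_dup w hnd
      obtain ⟨h1, h2, h3⟩ := h
      obtain ⟨hc1, hc2⟩ := chain_splice h3
      have hh1 : (P ++ y :: R).head? = some u := by
        rw [List.head?_append] at h1 ⊢
        simpa using h1
      have hh2 : (P ++ y :: R).getLast? = some v := by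
        rw [show P ++ y :: (Q ++ y :: R) = (P ++ y :: Q) ++ y :: R by simp,
          getLast?_append_cons] at h2
        rw [getLast?_append_cons]
        exact h2
      have hcyc : 0 ≤ dotProd k (betaPWalk k a (y :: (Q ++ [y]))) d := by
        refine cyc hsym hpc (y :: (Q ++ [y])).length _ le_rfl y ⟨rfl, ?_, hc2⟩
        rw [show y :: (Q ++ [y]) = (y :: Q) ++ [y] by simp]
        exact getLast?_snoc _ y
      have hlen : (P ++ y :: R).length ≤ m := by
        simp only [List.length_append, List.length_cons] at hw ⊢
        omega
      obtain ⟨w', hw', hnd', hle⟩ := ih (P ++ y :: R) hlen u v ⟨hh1, hh2, hc1⟩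
      refine ⟨w', hw', hnd', ?_⟩
      have e1 := betaPWalk_split (k := k) (a := a) P y (Q ++ y :: R)
      have e2 := betaPWalk_split (k := k) (a := a) (y :: Q) y R
      rw [show ((y :: Q) ++ y :: R) = y :: (Q ++ y :: R) by simp] at e2
      have e3 := betaPWalk_split (k := k) (a := a) P y R
      rw [e1, e2, dotProd_add, dotProd_add]
      rw [e3, dotProd_add] at hle
      rw [show (y :: (Q ++ [y])) = (y :: Q) ++ [y] by simp] at hcyc
      linarith

end S6aux
/-- Lemma 3: if `d ∈ 𝔻ᵏ` satisfies the path condition for `A`, then every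
`(u,v)`-upper-bound-walk can be replaced by a `(u,v)`-upper-bound-path with an equal or
smaller bound, and every `(u,v)`-lower-bound-walk by a `(u,v)`-lower-bound-path with an
equal or larger bound. -/
theorem statement6 (n k : ℕ) (hn : 1 ≤ n) (hk : 1 ≤ k) (a : Fin n → Fin n → ℕ)
    (hA : IsRobinson n k a) (d : ℕ → ℝ) (hd : IsThreshold k d)
    (hpc : PathCondition n k a d) (u v : Fin n) (w : List (Fin n)) :
    (IsUBWalk a u v w → ∃ w' : List (Fin n), IsUBWalk a u v w' ∧ w'.Nodup ∧
        dotProd k (betaPWalk k a w') d ≤ dotProd k (betaPWalk k a w) d) ∧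
      (IsLBWalk a u v w → ∃ w' : List (Fin n), IsLBWalk a u v w' ∧ w'.Nodup ∧
        dotProd k (betaMWalk k a w) d ≤ dotProd k (betaMWalk k a w') d) := by
  constructor
  · intro h
    exact S6aux.mainUB hA.1 hpc w.length w le_rfl u v h
  · intro h
    obtain ⟨p, hp, hnd, hle⟩ := S6aux.mainUB hA.1 hpc w.reverse.length w.reverse le_rfl v u
      (S6aux.lb_reverse hA.1 h)
    refine ⟨p.reverse, S6aux.ub_reverse hA.1 hp, List.nodup_reverse.2 hnd, ?_⟩
    rw [S6aux.betaMWalk_reverse hA.1 p, S6aux.dotProd_neg]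
    rw [S6aux.betaPWalk_reverse hA.1 w, S6aux.dotProd_neg] at hle
    linarith
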